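/- Let t ≥ 1 be an integer and let H be a finite hypergraph with VC-dimension d ≥ 1. Then d ≤ VC_t(H) ≤ 2·γ₂·max{d, t−1}, where γ₂ = 1/(2·h^{-1}(1/2)) (γ₂ ≈ 4.54). -/

import Mathlib

/-- `A` is shattered by the hyperedge family `E`. -/
def Shatters {V : Type*} [DecidableEq V] (E : Finset (Finset V)) (A : Finset V) : Prop :=
  ∀ B ⊆ A, ∃ e ∈ E, A ∩ e = B

/-- The hypergraph with hyperedge family `E` has VC-dimension exactly `d`. -/
def IsVCDim {V : Type*} [DecidableEq V] (E : Finset (Finset V)) (d : ℕ) : Prop :=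
  (∃ A : Finset V, Shatters E A ∧ A.card = d) ∧
  ∀ A : Finset V, Shatters E A → A.card ≤ d

/-- `T'` is `t`-realized by the hyperedge family `E` with respect to `T`:
`T' ∪ W ∈ Π_H(T)` for some `W ⊆ T` with `|W| < t`. -/
def TRealized {V : Type*} [DecidableEq V] (E : Finset (Finset V)) (t : ℕ)
    (T T' : Finset V) : Prop :=
  ∃ W ⊆ T, W.card < t ∧ ∃ e ∈ E, T ∩ e = T' ∪ W

/-- `T` is `t`-shattered by the hyperedge family `E`. -/
def TShattered {V : Type*} [DecidableEq V] (E : Finset (Finset V)) (t : ℕ)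
    (T : Finset V) : Prop :=
  ∀ T' ⊆ T, TRealized E t T T'

/-- The hypergraph with hyperedge family `E` has `t`-VC-dimension exactly `d`. -/
def IsTVCDim {V : Type*} [DecidableEq V] (E : Finset (Finset V)) (t d : ℕ) : Prop :=
  (∃ T : Finset V, TShattered E t T ∧ T.card = d) ∧
  ∀ T : Finset V, TShattered E t T → T.card ≤ d

/-- `A` `t`-stabs `B`: every hyperedge containing `B` contains at least `t` vertices of `A`. -/
def TStabs {V : Type*} [DecidableEq V] (E : Finset (Finset V)) (t : ℕ)
    (A B : Finset V) : Prop :=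
  ∀ e ∈ E, B ⊆ e → t ≤ (e ∩ A).card

instance {V : Type*} [DecidableEq V] (E : Finset (Finset V)) (t : ℕ) (A B : Finset V) :
    Decidable (TStabs E t A B) :=
  inferInstanceAs (Decidable (∀ e ∈ E, B ⊆ e → t ≤ (e ∩ A).card))

/-- The binary entropy function (all logarithms base 2). -/
noncomputable def binEntropy (x : ℝ) : ℝ :=
  -x * Real.logb 2 x - (1 - x) * Real.logb 2 (1 - x)


open Finset in
lemma card_filter_powerset {V : Type*} [DecidableEq V] (T : Finset V) (k : ℕ) :
    #({W ∈ T.powerset | #W ≤ k}) = ∑ i ∈ Iic k, (#T).choose i := by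
  have : ({W ∈ T.powerset | #W ≤ k}) = (Iic k).biUnion (fun i => T.powersetCard i) := by
    ext W
    simp only [mem_filter, mem_powerset, mem_biUnion, mem_Iic, mem_powersetCard]
    constructor
    · rintro ⟨h1, h2⟩; exact ⟨#W, h2, h1, rfl⟩
    · rintro ⟨i, hi, h1, rfl⟩; exact ⟨h1, hi⟩
  rw [this, card_biUnion]
  · simp [card_powersetCard]
  · intro i _ j _ hij
    exact T.pairwise_disjoint_powersetCard hij

open Finset in
lemma trace_card_le {V : Type*} [DecidableEq V] (E : Finset (Finset V)) (T : Finset V) (d : ℕ)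
    (hvc : ∀ A : Finset V, _root_.Shatters E A → #A ≤ d) :
    #(E.image (fun e => T ∩ e)) ≤ ∑ i ∈ Iic d, (#T).choose i := by
  classical
  set F := E.image (fun e => T ∩ e) with hF
  have hFT : ∀ s ∈ F, s ⊆ T := by
    intro s hs
    simp only [hF, mem_image] at hs
    obtain ⟨e, _, rfl⟩ := hs
    exact inter_subset_left
  set F' : Finset (Finset {v // v ∈ T}) := F.image (fun s => s.subtype (· ∈ T)) with hF'
  have hmapback : ∀ s ∈ F, (s.subtype (· ∈ T)).map (Function.Embedding.subtype _) = s := by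
    intro s hs
    rw [Finset.subtype_map, Finset.filter_true_of_mem (fun a ha => hFT s hs ha)]
  have hcard : #F = #F' := by
    refine (Finset.card_image_of_injOn ?_).symm
    intro s hs s' hs' h
    simp only at h
    rw [← hmapback s hs, ← hmapback s' hs', h]
  have hvcdim : F'.vcDim ≤ d := by
    apply Finset.sup_le
    intro B hB
    rw [Finset.mem_shatterer] at hB
    set A : Finset V := B.map (Function.Embedding.subtype _) with hA
    have hAcard : #A = #B := card_map _
    have hAT : A ⊆ T := by
      intro v hv
      simp only [hA, mem_map, Function.Embedding.coe_subtype] at hv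
      obtain ⟨b, _, rfl⟩ := hv
      exact b.2
    have : _root_.Shatters E A := by
      intro C hCA
      set C' : Finset {v // v ∈ T} := C.subtype (· ∈ T) with hC'
      have hC'B : C' ⊆ B := by
        intro b hb
        rw [hC', Finset.mem_subtype] at hb
        have : (b : V) ∈ A := hCA hb
        simp only [hA, mem_map, Function.Embedding.coe_subtype] at this
        obtain ⟨b', hb', hbe⟩ := this
        exact Subtype.ext hbe ▸ hb'
      obtain ⟨u, hu, hBu⟩ := hB hC'B
      simp only [hF', mem_image] at hu
      obtain ⟨s, hsF, rfl⟩ := hu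
      have hsF' := hsF
      simp only [hF, mem_image] at hsF'
      obtain ⟨e, heE, rfl⟩ := hsF'
      refine ⟨e, heE, ?_⟩
      ext v
      simp only [mem_inter]
      constructor
      · rintro ⟨hvA, hve⟩
        have hvT : v ∈ T := hAT hvA
        have hvB : (⟨v, hvT⟩ : {v // v ∈ T}) ∈ B := by
          simp only [hA, mem_map, Function.Embedding.coe_subtype] at hvA
          obtain ⟨b, hb, hbe⟩ := hvA
          rwa [show (⟨v, hvT⟩ : {v // v ∈ T}) = b from Subtype.ext hbe.symm]
        have : (⟨v, hvT⟩ : {v // v ∈ T}) ∈ B ∩ (T ∩ e).subtype (· ∈ T) := by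
          rw [mem_inter, Finset.mem_subtype]
          exact ⟨hvB, mem_inter.2 ⟨hvT, hve⟩⟩
        rw [hBu, hC', Finset.mem_subtype] at this
        exact this
      · intro hvC
        have hvA : v ∈ A := hCA hvC
        have hvT : v ∈ T := hAT hvA
        have : (⟨v, hvT⟩ : {v // v ∈ T}) ∈ C' := by
          rw [hC', Finset.mem_subtype]; exact hvC
        rw [← hBu, mem_inter, Finset.mem_subtype, mem_inter] at this
        exact ⟨hvA, this.2.2⟩
    have := hvc A this
    omega
  calc #F = #F' := hcard
    _ ≤ #F'.shatterer := Finset.card_le_card_shatterer _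
    _ ≤ ∑ i ∈ Iic F'.vcDim, (Fintype.card {v // v ∈ T}).choose i :=
        Finset.card_shatterer_le_sum_vcDim
    _ ≤ ∑ i ∈ Iic d, (Fintype.card {v // v ∈ T}).choose i :=
        Finset.sum_le_sum_of_subset (Iic_subset_Iic.2 hvcdim)
    _ = ∑ i ∈ Iic d, (#T).choose i := by rw [Fintype.card_coe]

open Finset in
lemma count_lemma {V : Type*} [DecidableEq V] (E : Finset (Finset V)) (t : ℕ) (T : Finset V)
    (hT : ∀ T' ⊆ T, ∃ W ⊆ T, W.card < t ∧ ∃ e ∈ E, T ∩ e = T' ∪ W)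
    (k : ℕ) (hk : t - 1 ≤ k) (ht : 1 ≤ t) :
    2 ^ #T ≤ #(E.image (fun e => T ∩ e)) * #({W ∈ T.powerset | #W ≤ k}) := by
  classical
  set F := E.image (fun e => T ∩ e) with hF
  set P := ({W ∈ T.powerset | #W ≤ k}) with hP
  have hsub : T.powerset ⊆ F.biUnion (fun s => {T' ∈ s.powerset | #(s \ T') < t}) := by
    intro T' hT'
    rw [mem_powerset] at hT'
    obtain ⟨W, hWT, hWc, e, heE, hTe⟩ := hT T' hT'
    rw [mem_biUnion]
    refine ⟨T ∩ e, mem_image_of_mem _ heE, ?_⟩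
    rw [mem_filter, mem_powerset, hTe]
    constructor
    · exact subset_union_left
    · calc #((T' ∪ W) \ T') ≤ #W := card_le_card (by
        intro a ha
        rw [mem_sdiff, mem_union] at ha
        tauto)
      _ < t := hWc
  have hper : ∀ s ∈ F, #({T' ∈ s.powerset | #(s \ T') < t}) ≤ #P := by
    intro s hs
    have hsT : s ⊆ T := by
      simp only [hF, mem_image] at hs
      obtain ⟨e, _, rfl⟩ := hs
      exact inter_subset_left
    apply Finset.card_le_card_of_injOn (fun T' => s \ T')
    · intro T' hT'
      rw [mem_coe, mem_filter, mem_powerset] at hT'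
      rw [hP, mem_coe, mem_filter, mem_powerset]
      simp only []
      exact ⟨(sdiff_subset).trans hsT, by omega⟩
    · intro a ha b hb hab
      rw [mem_coe, mem_filter, mem_powerset] at ha hb
      simp only at hab
      rw [← Finset.sdiff_sdiff_eq_self ha.1, hab, Finset.sdiff_sdiff_eq_self hb.1]
  calc 2 ^ #T = #T.powerset := (card_powerset T).symm
    _ ≤ #(F.biUnion (fun s => {T' ∈ s.powerset | #(s \ T') < t})) := card_le_card hsub
    _ ≤ ∑ s ∈ F, #({T' ∈ s.powerset | #(s \ T') < t}) := card_biUnion_le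
    _ ≤ ∑ _s ∈ F, #P := Finset.sum_le_sum hper
    _ = #F * #P := by rw [Finset.sum_const, smul_eq_mul]

open Finset in
lemma entropy_step (m k : ℕ) (hk : 1 ≤ k) (hkm : 2 * k < m)
    (hS : 2 ^ m ≤ (∑ i ∈ Iic k, m.choose i) ^ 2) :
    (1:ℝ)/2 ≤ binEntropy ((k:ℝ)/(m:ℝ)) := by
  have hm0 : 0 < m := by omega
  have hmR : (0:ℝ) < m := by exact_mod_cast hm0
  set p : ℝ := (k:ℝ)/(m:ℝ) with hp
  have hp0 : 0 < p := by positivity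
  have hp2 : p < 1/2 := by
    rw [hp, div_lt_iff₀ hmR]
    have : ((2*k:ℕ):ℝ) < ((m:ℕ):ℝ) := Nat.cast_lt.2 hkm
    push_cast at this ⊢
    linarith
  have h1p : 0 < 1 - p := by linarith
  have hmp : (m:ℝ) * p = k := by
    rw [hp]; field_simp
  have hkm' : k ≤ m := by omega
  have hm1p : (m:ℝ) * (1 - p) = ((m - k : ℕ) : ℝ) := by
    push_cast [hkm']
    nlinarith [hmp]
  set S : ℝ := ∑ i ∈ Iic k, (m.choose i : ℝ) with hSdef
  have hScast : S = ((∑ i ∈ Iic k, m.choose i : ℕ) : ℝ) := by push_cast [hSdef]; rfl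
  set X : ℝ := p ^ k * (1 - p) ^ (m - k) with hX
  have hX0 : 0 < X := by positivity
  have key : S * X ≤ 1 := by
    have h1 : ∀ i ∈ Iic k, (m.choose i : ℝ) * X ≤ (m.choose i : ℝ) * (p ^ i * (1-p) ^ (m-i)) := by
      intro i hi
      rw [mem_Iic] at hi
      have e1 : p ^ k = p ^ i * p ^ (k - i) := by rw [← pow_add]; congr 1; omega
      have e2 : (1-p) ^ (m-i) = (1-p) ^ (k-i) * (1-p) ^ (m-k) := by
        rw [← pow_add]; congr 1; omega
      have e3 : p ^ (k-i) ≤ (1-p) ^ (k-i) := pow_le_pow_left₀ hp0.le (by linarith) _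
      have hXle : X ≤ p ^ i * (1-p) ^ (m-i) := by
        rw [hX, e1, e2, mul_assoc]
        gcongr
      exact mul_le_mul_of_nonneg_left hXle (Nat.cast_nonneg _)
    calc S * X = ∑ i ∈ Iic k, (m.choose i : ℝ) * X := by rw [hSdef, Finset.sum_mul]
      _ ≤ ∑ i ∈ Iic k, (m.choose i : ℝ) * (p ^ i * (1-p) ^ (m-i)) := Finset.sum_le_sum h1
      _ ≤ ∑ i ∈ range (m+1), (m.choose i : ℝ) * (p ^ i * (1-p) ^ (m-i)) := by
          apply Finset.sum_le_sum_of_subset_of_nonneg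
          · intro i hi; rw [mem_Iic] at hi; rw [mem_range]; omega
          · intro i _ _; positivity
      _ = (p + (1-p)) ^ m := by
          rw [add_pow]
          apply Finset.sum_congr rfl
          intro i _; ring
      _ = 1 := by norm_num
  have hSle : S ≤ X⁻¹ := by
    rw [← one_div]
    exact (le_div_iff₀ hX0).mpr key
  have hS0 : (0:ℝ) ≤ S := Finset.sum_nonneg (fun i _ => Nat.cast_nonneg _)
  have hX2 : (2:ℝ) ^ m ≤ (X⁻¹)^2 := by
    have h2S : (2:ℝ) ^ m ≤ S ^ 2 := by
      rw [hScast]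
      exact_mod_cast hS
    have := pow_le_pow_left₀ hS0 hSle 2
    linarith
  have hm_le : (m:ℝ) ≤ Real.logb 2 ((X⁻¹)^2) := by
    have h1 := Real.logb_le_logb_of_le one_lt_two (by positivity) hX2
    calc (m:ℝ) = Real.logb 2 ((2:ℝ)^m) := by
          rw [Real.logb_pow]
          simp
      _ ≤ _ := h1
  have hlogX : Real.logb 2 ((X⁻¹)^2) =
      -2 * ((k:ℝ) * Real.logb 2 p + ((m-k:ℕ):ℝ) * Real.logb 2 (1-p)) := by
    rw [Real.logb_pow, Real.logb_inv, hX,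
      Real.logb_mul (by positivity) (by positivity), Real.logb_pow, Real.logb_pow]
    ring
  rw [hlogX, ← hmp, ← hm1p] at hm_le
  unfold binEntropy
  nlinarith [hm_le, hmR]

lemma binEntropy_eq_div (z : ℝ) : binEntropy z = Real.binEntropy z / Real.log 2 := by
  unfold binEntropy Real.binEntropy Real.logb
  rw [Real.log_inv, Real.log_inv]
  ring

theorem t_vc_dim_vs_vc_dim {V : Type*} [Fintype V] [DecidableEq V] (E : Finset (Finset V))
    (t : ℕ) (ht : 1 ≤ t) (d : ℕ) (hd : 1 ≤ d) (hvc : IsVCDim E d)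
    -- `x = h⁻¹(1/2)`, so that `γ₂ = 1/(2*x)`
    (x : ℝ) (hx : x ∈ Set.Ioc (0 : ℝ) (1 / 2)) (hxe : binEntropy x = 1 / 2)
    (d' : ℕ) (hvc' : IsTVCDim E t d') :
    d ≤ d' ∧ (d' : ℝ) ≤ 2 * (1 / (2 * x)) * max (d : ℝ) ((t : ℝ) - 1) := by
  classical
  obtain ⟨⟨A, hAsh, hAcard⟩, hvcmax⟩ := hvc
  obtain ⟨⟨T, hTsh, hTcard⟩, hmax'⟩ := hvc'
  have h1 : d ≤ d' := by
    have hts : TShattered E t A := by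
      intro T' hT'
      obtain ⟨e, he, hAe⟩ := hAsh T' hT'
      exact ⟨∅, Finset.empty_subset _, by simp; omega, e, he, by simp [hAe]⟩
    rw [← hAcard]
    exact hmax' A hts
  refine ⟨h1, ?_⟩
  have hx0 := hx.1
  have hx2 := hx.2
  set k := max d (t-1) with hk
  have hkd : d ≤ k := le_max_left _ _
  have hk1 : 1 ≤ k := le_trans hd hkd
  have hkR : ((k:ℕ):ℝ) = max (d:ℝ) ((t:ℝ)-1) := by
    rw [hk]
    push_cast [ht]
    rfl
  rw [← hkR]
  have hred : 2 * (1/(2*x)) * (k:ℝ) = (k:ℝ) / x := by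
    field_simp
  rw [hred, le_div_iff₀ hx0]
  by_cases hcase : d' ≤ 2*k
  · have hc : (d':ℝ) ≤ 2*(k:ℝ) := by exact_mod_cast hcase
    nlinarith [Nat.cast_nonneg d' (α := ℝ)]
  · push_neg at hcase
    have hcount : 2 ^ d' ≤ (∑ i ∈ Finset.Iic k, d'.choose i)^2 := by
      have c1 := count_lemma E t T (fun T' h => hTsh T' h) k (by omega) ht
      have c2 := trace_card_le E T d hvcmax
      have c3 := card_filter_powerset T k
      have c4 : (∑ i ∈ Finset.Iic d, T.card.choose i) ≤ ∑ i ∈ Finset.Iic k, T.card.choose i :=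
        Finset.sum_le_sum_of_subset (Finset.Iic_subset_Iic.2 hkd)
      rw [hTcard] at c1 c2 c3 c4
      calc 2 ^ d' ≤ _ := c1
        _ ≤ (∑ i ∈ Finset.Iic k, d'.choose i) * (∑ i ∈ Finset.Iic k, d'.choose i) := by
            rw [c3]
            exact Nat.mul_le_mul_right _ (le_trans c2 c4)
        _ = (∑ i ∈ Finset.Iic k, d'.choose i)^2 := (sq _).symm
    have hH := entropy_step d' k hk1 (by omega) hcount
    set p : ℝ := (k:ℝ)/(d':ℝ) with hp
    have hd'R : (0:ℝ) < d' := by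
      have : 0 < d' := by omega
      exact_mod_cast this
    have hp0 : 0 < p := by positivity
    have hp2 : p < 1/2 := by
      rw [hp, div_lt_iff₀ hd'R]
      have : ((2*k:ℕ):ℝ) < ((d':ℕ):ℝ) := Nat.cast_lt.2 hcase
      push_cast at this ⊢
      linarith
    have hxp : x ≤ p := by
      by_contra hc
      push_neg at hc
      have hlog2 : (0:ℝ) < Real.log 2 := Real.log_pos one_lt_two
      have mono := Real.binEntropy_strictMonoOn
        (Set.mem_Icc.2 ⟨hp0.le, by norm_num; linarith⟩)
        (Set.mem_Icc.2 ⟨hx0.le, by norm_num; linarith⟩) hc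
      have : binEntropy p < binEntropy x := by
        rw [binEntropy_eq_div, binEntropy_eq_div]
        gcongr
      rw [hxe] at this
      linarith
    have hpk : (d':ℝ) * p = k := by
      rw [hp]; field_simp
    nlinarith
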